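/- Lemma (budget-depletion lower bound). Suppose T₀ ≠ ∅ and let i* ∈ [m] be a resource with B_{τ,i*} < 1. If E ≥ 0 is such that ∑_{t∈T₀} c_{t,i*}(x₀) ≤ −β·|T₀| + E, then ∑_{t∈T_G^{<τ}} c_{t,i*}(x_t) ≥ B − 2 + β·|T₀| − E. (In the adversarial setting this hypothesis holds with E = 0, since c_{t,i}(x₀) ≤ −β for all t and i.) -/
import Mathlib


/-- Lemma (budget-depletion lower bound). If `T₀ ≠ ∅`, `i*` is a resource with
`B_{τ,i*} < 1`, and `∑_{t∈T₀} c_{t,i*}(x₀) ≤ −β·|T₀| + E` for some `E ≥ 0`, then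
`∑_{t∈T_G^{<τ}} c_{t,i*}(x_t) ≥ B − 2 + β·|T₀| − E`, where `B = T·ρ`. -/
theorem stmt_1 (T m : ℕ) (hT : 1 ≤ T) (hm : 1 ≤ m)
    (X : Type*) [Nonempty X] (x₀ : X)
    (β ρ : ℝ) (hβ : 0 ≤ β) (hρ0 : 0 < ρ) (hρ1 : ρ ≤ 1)
    (f : ℕ → X → ℝ)
    (hf0 : ∀ t ∈ Finset.Icc 1 T, ∀ x, 0 ≤ f t x)
    (hf1 : ∀ t ∈ Finset.Icc 1 T, ∀ x, f t x ≤ 1)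
    (c : ℕ → X → Fin m → ℝ)
    (hc : ∀ t ∈ Finset.Icc 1 T, ∀ x i, |c t x i| ≤ 1)
    (hcx₀ : ∀ t ∈ Finset.Icc 1 T, ∀ i, c t x₀ i ≤ -β)
    (x : ℕ → X) (lam : ℕ → Fin m → ℝ)
    (hlam : ∀ t ∈ Finset.Icc 1 T, ∀ i, 0 ≤ lam t i)
    (Bud : ℕ → Fin m → ℝ)
    (hB1 : ∀ i, Bud 1 i = T * ρ)
    (hBrec : ∀ t ∈ Finset.Icc 1 T, ∀ i, Bud (t + 1) i = Bud t i - c t (x t) i)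
    (T0 TG TGlt TGgt : Finset ℕ) (τ : ℕ)
    (hT0 : ∀ t, t ∈ T0 ↔ t ∈ Finset.Icc 1 T ∧ ∃ i, Bud t i < 1)
    (hTG : TG = Finset.Icc 1 T \ T0)
    (hτ : τ = T0.sup id)
    (hTGlt : TGlt = TG.filter (fun t => t ≤ τ))
    (hTGgt : TGgt = Finset.Icc (τ + 1) T)
    (hvoid : ∀ t ∈ T0, x t = x₀)
    -- specific hypotheses
    (hne : T0.Nonempty)
    (istar : Fin m) (histar : Bud τ istar < 1)
    (E : ℝ) (hE : 0 ≤ E)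
    (hvoidcost : ∑ t ∈ T0, c t x₀ istar ≤ -β * T0.card + E) :
    ∑ t ∈ TGlt, c t (x t) istar ≥ T * ρ - 2 + β * T0.card - E := by

  -- τ is in T0
  obtain ⟨t₀, ht₀, hτeq⟩ := Finset.exists_mem_eq_sup T0 hne id
  have hτT0 : τ ∈ T0 := by rw [hτ, hτeq]; exact ht₀
  have hτIcc : τ ∈ Finset.Icc 1 T := ((hT0 τ).mp hτT0).1
  have hτ1 : 1 ≤ τ := (Finset.mem_Icc.mp hτIcc).1
  have hτT : τ ≤ T := (Finset.mem_Icc.mp hτIcc).2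
  -- budget formula
  have key : ∀ t, 1 ≤ t → t ≤ T + 1 →
      Bud t istar = T * ρ - ∑ s ∈ Finset.Ico 1 t, c s (x s) istar := by
    intro t
    induction t with
    | zero => omega
    | succ n ih =>
      intro _ hn
      rcases Nat.eq_or_lt_of_le (Nat.one_le_iff_ne_zero.mpr (by omega) : 1 ≤ n + 1) with h1 | h1
      · simp [← h1, hB1]
      · have hn1 : 1 ≤ n := by omega
        have hnT : n ≤ T := by omega
        rw [hBrec n (Finset.mem_Icc.mpr ⟨hn1, hnT⟩) istar, ih hn1 (by omega),
          Finset.sum_Ico_succ_top hn1]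
        ring
  have hBudτ : Bud τ istar = T * ρ - ∑ s ∈ Finset.Ico 1 τ, c s (x s) istar :=
    key τ hτ1 (by omega)
  -- elements of T0 are ≤ τ and ≥ 1
  have hle : ∀ s ∈ T0, s ≤ τ := by
    intro s hs; rw [hτ]; exact Finset.le_sup (f := id) hs
  -- split Ico 1 τ
  have hsplit : Finset.Ico 1 τ = T0.erase τ ∪ TGlt := by
    ext s
    simp only [Finset.mem_Ico, Finset.mem_union, Finset.mem_erase, hTGlt, hTG,
      Finset.mem_filter, Finset.mem_sdiff, Finset.mem_Icc]
    constructor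
    · intro ⟨h1, h2⟩
      by_cases hsT0 : s ∈ T0
      · exact Or.inl ⟨by omega, hsT0⟩
      · exact Or.inr ⟨⟨⟨h1, by omega⟩, hsT0⟩, by omega⟩
    · rintro (⟨hne', hsT0⟩ | ⟨⟨⟨h1, _⟩, hsT0⟩, h2⟩)
      · have := hle s hsT0
        have := (Finset.mem_Icc.mp ((hT0 s).mp hsT0).1).1
        omega
      · have : s ≠ τ := fun h => hsT0 (h ▸ hτT0)
        omega
  have hdisj : Disjoint (T0.erase τ) TGlt := by
    rw [Finset.disjoint_left]
    intro s hs1 hs2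
    rw [hTGlt, hTG] at hs2
    exact (Finset.mem_sdiff.mp (Finset.mem_filter.mp hs2).1).2 (Finset.mem_of_mem_erase hs1)
  have hsum : ∑ s ∈ Finset.Ico 1 τ, c s (x s) istar
      = ∑ s ∈ T0.erase τ, c s (x s) istar + ∑ s ∈ TGlt, c s (x s) istar := by
    rw [hsplit, Finset.sum_union hdisj]
  -- rewrite T0.erase τ sum with x₀
  have hsame : ∑ s ∈ T0.erase τ, c s (x s) istar = ∑ s ∈ T0.erase τ, c s x₀ istar :=
    Finset.sum_congr rfl fun s hs => by rw [hvoid s (Finset.mem_of_mem_erase hs)]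
  have herase : ∑ s ∈ T0.erase τ, c s x₀ istar
      = (∑ s ∈ T0, c s x₀ istar) - c τ x₀ istar :=
    Finset.sum_erase_eq_sub hτT0
  have hcτ : -1 ≤ c τ x₀ istar := neg_le_of_abs_le (hc τ hτIcc x₀ istar)
  have hS0 : ∑ s ∈ T0.erase τ, c s (x s) istar ≤ -β * T0.card + E + 1 := by
    rw [hsame, herase]; linarith
  rw [hBudτ, hsum] at histar
  linarith
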